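/- Let N be a positive integer and let f : ZMod N → ℂ be nonzero. Then |supp f| · |supp 𝓕 f| = N if and only if there exist a nonzero c ∈ ℂ, elements a, b : ZMod N, and an additive subgroup H of ZMod N such that f(x) = c · exp(2πi·b̄·x̄/N) for all x ∈ a + H and f(x) = 0 otherwise. (This is Theorem 3.11 of the paper — w is an extremal bi-partial isometry if and only if w is a bi-shift of a biprojection — specialized to L^∞(ℤ/Nℤ), where bi-shifts of biprojections are nonzero multiples of modulated translates of subgroup indicator functions.) -/

import Mathlib

open Complex Finset

/-- The unitary discrete Fourier transform on `ZMod N`. -/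
noncomputable def dft (N : ℕ) [NeZero N] (f : ZMod N → ℂ) : ZMod N → ℂ :=
  fun k => (((N : ℝ) ^ (-(1/2 : ℝ)) : ℝ) : ℂ) *
    ∑ x : ZMod N, f x *
      Complex.exp (-2 * Real.pi * Complex.I * (k.val : ℂ) * (x.val : ℂ) / (N : ℂ))





set_option linter.unusedSectionVars false

noncomputable def Complex.abs : AbsoluteValue ℂ ℝ := NormedField.toAbsoluteValue ℂ

lemma Complex.abs_apply' (z : ℂ) : Complex.abs z = ‖z‖ := rfl

lemma Complex.sq_abs (z : ℂ) : Complex.abs z ^ 2 = Complex.normSq z := Complex.sq_norm z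

lemma Complex.abs_conj (z : ℂ) : Complex.abs (starRingEnd ℂ z) = Complex.abs z :=
  Complex.norm_conj z

lemma Complex.abs_ofReal (r : ℝ) : Complex.abs (r : ℂ) = |r| := by
  rw [Complex.abs_apply', Complex.norm_real, Real.norm_eq_abs]

lemma Complex.re_le_abs (z : ℂ) : z.re ≤ Complex.abs z := Complex.re_le_norm z

lemma Complex.normSq_eq_abs (z : ℂ) : Complex.normSq z = Complex.abs z ^ 2 :=
  Complex.normSq_eq_norm_sq z

lemma Complex.abs_exp_ofReal_mul_I (x : ℝ) : Complex.abs (Complex.exp (x * Complex.I)) = 1 :=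
  Complex.norm_exp_ofReal_mul_I x

section base
variable {N : ℕ} [NeZero N]

/-- exp(2πi m/N) for integer m. -/
noncomputable def EE (N : ℕ) (m : ℤ) : ℂ := Complex.exp (2 * Real.pi * Complex.I * m / N)

lemma EE_add (m n : ℤ) : EE N (m + n) = EE N m * EE N n := by
  rw [EE, EE, EE, ← Complex.exp_add]
  congr 1
  push_cast
  ring

lemma EE_zero : EE N 0 = 1 := by simp [EE]

lemma EE_int_mul (t : ℤ) : EE N (N * t) = 1 := by
  have hN : (N : ℂ) ≠ 0 := Nat.cast_ne_zero.mpr (NeZero.ne N)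
  have h : (2 * Real.pi * Complex.I * ((N * t : ℤ) : ℂ) / N : ℂ)
      = t * (2 * Real.pi * Complex.I) := by
    push_cast
    field_simp
  rw [EE, h, Complex.exp_int_mul_two_pi_mul_I]

lemma EE_congr {m n : ℤ} (h : (m : ZMod N) = (n : ZMod N)) : EE N m = EE N n := by
  have h0 : ((m - n : ℤ) : ZMod N) = 0 := by push_cast [h]; ring
  obtain ⟨t, ht⟩ := (ZMod.intCast_zmod_eq_zero_iff_dvd _ _).mp h0
  have hm : m = n + N * t := by omega
  rw [hm, EE_add, EE_int_mul, mul_one]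

/-- The standard character on ZMod N. -/
noncomputable def ee (N : ℕ) [NeZero N] (x : ZMod N) : ℂ := EE N x.val

lemma ee_eq_EE (x : ZMod N) : ee N x = EE N (x.val : ℤ) := rfl

lemma EE_eq_ee (m : ℤ) : EE N m = ee N (m : ZMod N) := by
  rw [ee_eq_EE]
  exact EE_congr (by simp [ZMod.natCast_val, ZMod.intCast_cast])

lemma ee_add (x y : ZMod N) : ee N (x + y) = ee N x * ee N y := by
  simp only [ee_eq_EE, ← EE_add]
  exact EE_congr (by push_cast [ZMod.natCast_val]; ring)

lemma ee_zero : ee N 0 = 1 := by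
  rw [ee_eq_EE]; simp [ZMod.val_zero, EE_zero]

lemma ee_neg_mul (x : ZMod N) : ee N (-x) * ee N x = 1 := by
  rw [← ee_add, neg_add_cancel, ee_zero]

lemma ee_ne_zero (x : ZMod N) : ee N x ≠ 0 := Complex.exp_ne_zero _

lemma abs_ee (x : ZMod N) : Complex.abs (ee N x) = 1 := by
  rw [ee_eq_EE, EE]
  have h : (2 * Real.pi * Complex.I * ((x.val : ℤ) : ℂ) / N : ℂ)
      = ((2 * Real.pi * x.val / N : ℝ) : ℂ) * Complex.I := by
    push_cast; ring
  rw [h, Complex.abs_exp_ofReal_mul_I]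

lemma star_ee (x : ZMod N) : starRingEnd ℂ (ee N x) = ee N (-x) := by
  have h1 := ee_neg_mul (N := N) x
  have h2 : starRingEnd ℂ (ee N x) * ee N x = 1 := by
    rw [mul_comm, Complex.mul_conj]
    norm_cast
    rw [← Complex.sq_abs, abs_ee]
    norm_num
  have hx := ee_ne_zero (N := N) x
  have := h2.trans h1.symm
  exact mul_right_cancel₀ hx this

lemma ee_eq_one_iff {x : ZMod N} : ee N x = 1 ↔ x = 0 := by
  constructor
  · intro h
    rw [ee_eq_EE, EE, Complex.exp_eq_one_iff] at h
    obtain ⟨n, hn⟩ := h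
    have hN : (N : ℂ) ≠ 0 := Nat.cast_ne_zero.mpr (NeZero.ne N)
    have h2πI : (2 * Real.pi * Complex.I : ℂ) ≠ 0 := by
      simp [Real.pi_ne_zero, Complex.I_ne_zero]
    have hval : ((x.val : ℤ) : ℂ) = n * N := by
      have h2 : 2 * Real.pi * Complex.I * ((x.val : ℤ) : ℂ) = (n : ℂ) * (2 * Real.pi * Complex.I) * N := by
        have h4 := congrArg (fun z : ℂ => z * (N : ℂ)) hn
        simp only [div_mul_cancel₀ _ hN] at h4
        linear_combination h4
      have h3 : (2 * Real.pi * Complex.I : ℂ) * ((x.val : ℤ) : ℂ)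
          = (2 * Real.pi * Complex.I : ℂ) * ((n : ℂ) * N) := by linear_combination h2
      exact mul_left_cancel₀ h2πI h3
    have hZ : (x.val : ℤ) = n * N := by exact_mod_cast hval
    have hdvdZ : (N : ℤ) ∣ (x.val : ℤ) := ⟨n, by linarith [hZ]⟩
    have hdvd : N ∣ x.val := Int.ofNat_dvd.mp hdvdZ
    have hv0 : x.val = 0 := Nat.eq_zero_of_dvd_of_lt hdvd (ZMod.val_lt x)
    exact (ZMod.val_eq_zero x).mp hv0
  · rintro rfl; exact ee_zero

lemma ee_eq_ee_iff {x y : ZMod N} : ee N x = ee N y ↔ x = y := by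
  constructor
  · intro h
    have h1 : ee N (x - y) * ee N y = 1 * ee N y := by
      rw [← ee_add, sub_add_cancel, h, one_mul]
    have h2 : ee N (x - y) = 1 := mul_right_cancel₀ (ee_ne_zero y) h1
    exact sub_eq_zero.mp (ee_eq_one_iff.mp h2)
  · rintro rfl; rfl

end base

section part2
variable {N : ℕ} [NeZero N]

lemma ee_neg (x : ZMod N) : ee N (-x) = (ee N x)⁻¹ :=
  eq_inv_of_mul_eq_one_left (ee_neg_mul x)

lemma exp_pos_eq (b x : ZMod N) :
    Complex.exp (2 * Real.pi * Complex.I * (b.val : ℂ) * (x.val : ℂ) / (N : ℂ))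
      = ee N (b * x) := by
  have h : (2 * Real.pi * Complex.I * (b.val : ℂ) * (x.val : ℂ) / (N : ℂ))
      = 2 * Real.pi * Complex.I * (((b.val * x.val : ℤ)) : ℂ) / N := by push_cast; ring
  rw [h]
  have h2 := EE_eq_ee (N := N) ((b.val * x.val : ℤ))
  simp only [EE] at h2
  rw [h2]
  congr 1
  push_cast [ZMod.natCast_val]
  ring

lemma exp_neg_eq (k x : ZMod N) :
    Complex.exp (-2 * Real.pi * Complex.I * (k.val : ℂ) * (x.val : ℂ) / (N : ℂ))
      = ee N (-(k * x)) := by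
  have h : (-2 * Real.pi * Complex.I * (k.val : ℂ) * (x.val : ℂ) / (N : ℂ))
      = -(2 * Real.pi * Complex.I * (k.val : ℂ) * (x.val : ℂ) / (N : ℂ)) := by ring
  rw [h, Complex.exp_neg, exp_pos_eq, ← ee_neg]

lemma dft_eq (f : ZMod N → ℂ) (k : ZMod N) :
    dft N f k = (((N : ℝ) ^ (-(1/2 : ℝ)) : ℝ) : ℂ) * ∑ x : ZMod N, f x * ee N (-(k * x)) := by
  rw [dft]
  congr 1
  exact Finset.sum_congr rfl fun x _ => by rw [exp_neg_eq]

lemma sum_ee_eq_zero {m : ZMod N} (hm : m ≠ 0) : ∑ x : ZMod N, ee N (m * x) = 0 := by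
  set S := ∑ x : ZMod N, ee N (m * x) with hS
  have key : ee N m * S = S := by
    rw [hS, Finset.mul_sum]
    have h1 : ∀ x : ZMod N, ee N m * ee N (m * x) = ee N (m * (x + 1)) := by
      intro x
      rw [mul_add, mul_one, ee_add, mul_comm]
    simp_rw [h1]
    exact Fintype.sum_equiv (Equiv.addRight 1) _ _ (fun x => rfl)
  have h2 : (ee N m - 1) * S = 0 := by linear_combination key
  rcases mul_eq_zero.mp h2 with h | h
  · exact absurd (sub_eq_zero.mp h) fun hh => hm (ee_eq_one_iff.mp hh)
  · exact h

lemma sum_ee (m : ZMod N) : ∑ x : ZMod N, ee N (m * x) = if m = 0 then (N : ℂ) else 0 := by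
  split_ifs with h
  · subst h; simp [ee_zero]
  · exact sum_ee_eq_zero h

/-- The annihilator of an additive subgroup of ZMod N. -/
def perp (N : ℕ) [NeZero N] (H : AddSubgroup (ZMod N)) : AddSubgroup (ZMod N) where
  carrier := {k | ∀ h ∈ H, k * h = 0}
  zero_mem' := by intro h hh; simp
  add_mem' := by intro a b ha hb h hh; rw [add_mul, ha h hh, hb h hh, add_zero]
  neg_mem' := by intro a ha h hh; rw [neg_mul, ha h hh, neg_zero]

lemma mem_perp {H : AddSubgroup (ZMod N)} {k : ZMod N} :
    k ∈ perp N H ↔ ∀ h ∈ H, k * h = 0 := Iff.rfl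

/-- Cardinality relation: |H| * |perp H| = N. -/
lemma card_mul_card_perp (H : AddSubgroup (ZMod N)) :
    Nat.card H * Nat.card (perp N H) = N := by
  -- H is cyclic: get a generator
  obtain ⟨⟨g, hgH⟩, hgen⟩ := IsAddCyclic.exists_generator (α := H)
  -- H = zmultiples g
  have hH : H = AddSubgroup.zmultiples g := by
    apply le_antisymm
    · intro x hx
      obtain ⟨n, hn⟩ := hgen ⟨x, hx⟩
      exact ⟨n, by simpa using congrArg Subtype.val hn⟩
    · rw [AddSubgroup.zmultiples_le]
      exact hgH
  -- the hom k ↦ k * g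
  let φ : ZMod N →+ ZMod N := AddMonoidHom.mulRight g
  have hker : φ.ker = perp N H := by
    ext k
    simp only [AddMonoidHom.mem_ker, mem_perp, φ, AddMonoidHom.mulRight_apply]
    constructor
    · intro hk h hh
      rw [hH] at hh
      obtain ⟨n, hn⟩ := hh
      simp only at hn
      rw [← hn, mul_smul_comm, hk, smul_zero]
    · intro hk
      exact hk g hgH
  have hrange : φ.range = H := by
    ext x
    simp only [AddMonoidHom.mem_range, φ, AddMonoidHom.mulRight_apply]
    rw [hH]
    constructor
    · rintro ⟨k, rfl⟩
      refine ⟨(k.val : ℤ), ?_⟩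
      show ((k.val : ℤ)) • g = k * g
      have h5 : ((k.val : ℤ)) • g = ((k.val : ℕ)) • g := natCast_zsmul g k.val
      rw [h5, nsmul_eq_mul, ZMod.natCast_val, ZMod.cast_id]
    · rintro ⟨n, rfl⟩
      refine ⟨(n : ZMod N), ?_⟩
      show (n : ZMod N) * g = n • g
      exact (zsmul_eq_mul g n).symm
  have hcard := AddSubgroup.card_eq_card_quotient_mul_card_addSubgroup φ.ker
  have hqr : Nat.card (ZMod N ⧸ φ.ker) = Nat.card φ.range :=
    Nat.card_congr (QuotientAddGroup.quotientKerEquivRange φ).toEquiv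
  have hNc : Nat.card (ZMod N) = N := Nat.card_zmod N
  rw [hqr, hrange, hker] at hcard
  exact hcard.symm.trans hNc

end part2

section part3
variable {N : ℕ} [NeZero N]

open scoped Classical

lemma sum_ee_subgroup (H : AddSubgroup (ZMod N)) (m : ZMod N) :
    ∑ h : H, ee N (m * (h : ZMod N)) = if m ∈ perp N H then (Nat.card H : ℂ) else 0 := by
  split_ifs with hm
  · rw [mem_perp] at hm
    have h1 : ∀ h : H, ee N (m * (h : ZMod N)) = 1 := fun h => by rw [hm _ h.2]; exact ee_zero
    simp only [h1]
    simp [Nat.card_eq_fintype_card]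
  · rw [mem_perp] at hm; push_neg at hm
    obtain ⟨h₀, hh₀, hne⟩ := hm
    set S := ∑ h : H, ee N (m * (h : ZMod N)) with hS
    have key : ee N (m * h₀) * S = S := by
      rw [hS, Finset.mul_sum]
      have h1 : ∀ h : H, ee N (m * h₀) * ee N (m * (h : ZMod N))
          = ee N (m * ((h + (⟨h₀, hh₀⟩ : H) : H) : ZMod N)) := by
        intro h
        rw [AddSubgroup.coe_add, mul_add, ee_add, mul_comm]
      simp_rw [h1]
      exact Fintype.sum_equiv (Equiv.addRight (⟨h₀, hh₀⟩ : H)) _ _ (fun h => rfl)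
    have h2 : (ee N (m * h₀) - 1) * S = 0 := by linear_combination key
    rcases mul_eq_zero.mp h2 with h | h
    · exact absurd (ee_eq_one_iff.mp (sub_eq_zero.mp h)) (by simpa using hne)
    · exact h

lemma nu_sq : ((N : ℝ) ^ (-(1/2 : ℝ))) ^ 2 = (N : ℝ)⁻¹ := by
  have hN : (0 : ℝ) < N := by exact_mod_cast Nat.pos_of_ne_zero (NeZero.ne N)
  rw [← Real.rpow_natCast ((N : ℝ) ^ (-(1/2 : ℝ))) 2, ← Real.rpow_mul hN.le]
  norm_num
  exact (Real.rpow_neg_one _).trans rfl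

lemma nu_pos : (0 : ℝ) < (N : ℝ) ^ (-(1/2 : ℝ)) := by
  have hN : (0 : ℝ) < N := by exact_mod_cast Nat.pos_of_ne_zero (NeZero.ne N)
  exact Real.rpow_pos_of_pos hN _

lemma parseval (f : ZMod N → ℂ) :
    ∑ k : ZMod N, Complex.normSq (dft N f k) = ∑ x : ZMod N, Complex.normSq (f x) := by
  have hC : ∑ k : ZMod N, (Complex.normSq (dft N f k) : ℂ)
      = ∑ x : ZMod N, (Complex.normSq (f x) : ℂ) := by
    set ν : ℝ := (N : ℝ) ^ (-(1/2 : ℝ)) with hν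
    have expand : ∀ k : ZMod N, (Complex.normSq (dft N f k) : ℂ)
        = (ν^2 : ℝ) * ∑ x : ZMod N, ∑ y : ZMod N,
            f x * starRingEnd ℂ (f y) * ee N ((y - x) * k) := by
      intro k
      rw [← Complex.mul_conj, dft_eq]
      rw [map_mul, Complex.conj_ofReal, map_sum]
      have hconj : ∀ y : ZMod N, starRingEnd ℂ (f y * ee N (-(k * y)))
          = starRingEnd ℂ (f y) * ee N (k * y) := by
        intro y
        rw [map_mul, star_ee, neg_neg]
      simp_rw [hconj]
      rw [show ((ν : ℂ) * ∑ x : ZMod N, f x * ee N (-(k * x))) *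
          ((ν : ℂ) * ∑ y : ZMod N, starRingEnd ℂ (f y) * ee N (k * y))
          = ((ν : ℂ) * (ν : ℂ)) * ((∑ x : ZMod N, f x * ee N (-(k * x))) *
            (∑ y : ZMod N, starRingEnd ℂ (f y) * ee N (k * y))) from by ring]
      rw [Finset.sum_mul_sum]
      push_cast
      rw [sq]
      congr 1
      apply Finset.sum_congr rfl
      intro x _
      apply Finset.sum_congr rfl
      intro y _
      have : ee N (-(k * x)) * ee N (k * y) = ee N ((y - x) * k) := by
        rw [← ee_add]; congr 1; ring
      linear_combination (f x * starRingEnd ℂ (f y)) * this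
    simp_rw [expand]
    rw [← Finset.mul_sum]
    have swap : ∑ k : ZMod N, ∑ x : ZMod N, ∑ y : ZMod N,
          f x * starRingEnd ℂ (f y) * ee N ((y - x) * k)
        = ∑ x : ZMod N, ∑ k : ZMod N, ∑ y : ZMod N,
          f x * starRingEnd ℂ (f y) * ee N ((y - x) * k) := Finset.sum_comm
    rw [swap]
    have hx1 : ∀ x : ZMod N, ∑ k : ZMod N, ∑ y : ZMod N,
          f x * starRingEnd ℂ (f y) * ee N ((y - x) * k)
        = (Complex.normSq (f x) : ℂ) * N := by
      intro x
      rw [Finset.sum_comm]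
      have hy : ∀ y : ZMod N, ∑ k : ZMod N, f x * starRingEnd ℂ (f y) * ee N ((y - x) * k)
          = f x * starRingEnd ℂ (f y) * (if y - x = 0 then (N : ℂ) else 0) := by
        intro y
        rw [← Finset.mul_sum, sum_ee]
      simp_rw [hy]
      rw [Finset.sum_eq_single x]
      · rw [if_pos (sub_self x), Complex.mul_conj]
      · intro y _ hyx
        rw [if_neg (sub_ne_zero.mpr hyx), mul_zero]
      · intro hx; exact absurd (Finset.mem_univ x) hx
    simp_rw [hx1]
    rw [← Finset.sum_mul]
    have hνN : ((ν ^ 2 : ℝ) : ℂ) * (N : ℂ) = 1 := by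
      rw [nu_sq]
      push_cast
      have hN : (N : ℂ) ≠ 0 := Nat.cast_ne_zero.mpr (NeZero.ne N)
      field_simp
    calc ((ν ^ 2 : ℝ) : ℂ) * ((∑ x : ZMod N, (Complex.normSq (f x) : ℂ)) * N)
        = (((ν ^ 2 : ℝ) : ℂ) * N) * ∑ x : ZMod N, (Complex.normSq (f x) : ℂ) := by ring
      _ = ∑ x : ZMod N, (Complex.normSq (f x) : ℂ) := by rw [hνN, one_mul]
  exact_mod_cast hC

lemma align {α : Type*} (s : Finset α) (z : α → ℂ)
    (h : Complex.abs (∑ x ∈ s, z x) = ∑ x ∈ s, Complex.abs (z x))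
    {x : α} (hx : x ∈ s) :
    z x * Complex.abs (∑ y ∈ s, z y) = Complex.abs (z x) * ∑ y ∈ s, z y := by
  set S := ∑ y ∈ s, z y with hS
  by_cases hS0 : S = 0
  · rw [hS0]; simp
  · have hRe : ∀ y ∈ s, (z y * starRingEnd ℂ S).re ≤ Complex.abs (z y) * Complex.abs S := by
      intro y _
      calc (z y * starRingEnd ℂ S).re ≤ Complex.abs (z y * starRingEnd ℂ S) := Complex.re_le_abs _
        _ = Complex.abs (z y) * Complex.abs S := by rw [map_mul, Complex.abs_conj]
    have hsum : ∑ y ∈ s, (z y * starRingEnd ℂ S).re = ∑ y ∈ s, Complex.abs (z y) * Complex.abs S := by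
      rw [← Complex.re_sum, ← Finset.sum_mul, ← hS, Complex.mul_conj, Complex.ofReal_re,
        Complex.normSq_eq_abs, ← Finset.sum_mul, ← h, sq]
    have hpt : ∀ y ∈ s, (z y * starRingEnd ℂ S).re = Complex.abs (z y) * Complex.abs S := by
      intro y hy
      by_contra hne
      have hlt : (z y * starRingEnd ℂ S).re < Complex.abs (z y) * Complex.abs S :=
        lt_of_le_of_ne (hRe y hy) hne
      have := Finset.sum_lt_sum (f := fun y => (z y * starRingEnd ℂ S).re)
        (g := fun y => Complex.abs (z y) * Complex.abs S) hRe ⟨y, hy, hlt⟩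
      rw [hsum] at this
      exact lt_irrefl _ this
    -- w := z x * conj S equals its abs
    set w := z x * starRingEnd ℂ S with hw
    have hwre : w.re = Complex.abs w := by
      rw [hpt x hx, hw, map_mul, Complex.abs_conj]
    have hwim : w.im = 0 := by
      have h1 : Complex.abs w ^ 2 = w.re ^ 2 + w.im ^ 2 := by
        rw [Complex.sq_abs, Complex.normSq_apply]; ring
      have h3 : w.re ^ 2 = Complex.abs w ^ 2 := by rw [hwre]
      have h4 : w.im ^ 2 = 0 := by linarith
      exact pow_eq_zero_iff two_ne_zero |>.mp h4
    have hweq : w = ((Complex.abs (z x) * Complex.abs S : ℝ) : ℂ) := by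
      apply Complex.ext
      · rw [Complex.ofReal_re, ← hpt x hx]
      · rw [Complex.ofReal_im, hwim]
    -- multiply by S
    have h2 : z x * (starRingEnd ℂ S * S) = (Complex.abs (z x) : ℂ) * (Complex.abs S : ℂ) * S := by
      rw [← mul_assoc, ← hw, hweq]; push_cast; ring
    rw [mul_comm (starRingEnd ℂ S) S, Complex.mul_conj, Complex.normSq_eq_abs] at h2
    have hSabs : (Complex.abs S : ℂ) ≠ 0 := by
      simp only [ne_eq, Complex.ofReal_eq_zero, map_eq_zero]
      exact hS0
    have h3 : z x * (Complex.abs S : ℂ) * (Complex.abs S : ℂ)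
        = (Complex.abs (z x) : ℂ) * S * (Complex.abs S : ℂ) := by
      push_cast at h2 ⊢
      rw [sq] at h2
      linear_combination h2
    exact mul_right_cancel₀ hSabs h3

end part3

section part4
variable {N : ℕ} [NeZero N]

open scoped Classical

lemma subgroup_card_coe (H : AddSubgroup (ZMod N)) :
    (H : Set (ZMod N)).ncard = Nat.card H := by
  rw [← Nat.card_coe_set_eq]
  rfl

lemma sum_ite_mem_subgroup (H : AddSubgroup (ZMod N)) (g : ZMod N → ℂ) :
    ∑ u : ZMod N, (if u ∈ H then g u else 0) = ∑ h : H, g h := by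
  rw [← Finset.sum_filter]
  exact (Finset.sum_subtype (p := (· ∈ H)) (Finset.univ.filter (· ∈ H)) (fun u => by simp) g)

lemma reverse_dir (f : ZMod N → ℂ) (c : ℂ) (hc : c ≠ 0) (a b : ZMod N)
    (H : AddSubgroup (ZMod N))
    (hstruct : ∀ x : ZMod N, (x - a ∈ H → f x = c * ee N (b * x)) ∧ (x - a ∉ H → f x = 0)) :
    (Function.support f).ncard * (Function.support (dft N f)).ncard = N := by
  have hsupp : Function.support f = {x | x - a ∈ H} := by
    ext x
    simp only [Function.mem_support, Set.mem_setOf_eq]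
    constructor
    · intro hfx
      by_contra hxa
      exact hfx ((hstruct x).2 hxa)
    · intro hxa
      rw [(hstruct x).1 hxa]
      exact mul_ne_zero hc (ee_ne_zero _)
  have hcard1 : (Function.support f).ncard = Nat.card H := by
    rw [hsupp]
    have himg : {x : ZMod N | x - a ∈ H} = (fun h => a + h) '' (H : Set (ZMod N)) := by
      ext x
      simp only [Set.mem_setOf_eq, Set.mem_image, SetLike.mem_coe]
      constructor
      · intro hx; exact ⟨x - a, hx, by ring⟩
      · rintro ⟨h, hh, rfl⟩; simpa using hh
    rw [himg, Set.ncard_image_of_injective _ (add_right_injective a), subgroup_card_coe]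
  have hdft : ∀ k : ZMod N, dft N f k
      = (((N : ℝ) ^ (-(1/2 : ℝ)) : ℝ) : ℂ) * (c * ee N ((b - k) * a)) *
        (if b - k ∈ perp N H then (Nat.card H : ℂ) else 0) := by
    intro k
    rw [dft_eq]
    have hterm : ∀ x : ZMod N, f x * ee N (-(k * x))
        = if x - a ∈ H then c * ee N ((b - k) * x) else 0 := by
      intro x
      by_cases hx : x - a ∈ H
      · rw [if_pos hx, (hstruct x).1 hx]
        have hmul : ee N (b * x) * ee N (-(k * x)) = ee N ((b - k) * x) := by
          rw [← ee_add]; congr 1; ring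
        linear_combination c * hmul
      · rw [if_neg hx, (hstruct x).2 hx, zero_mul]
    simp_rw [hterm]
    have hreindex : ∑ x : ZMod N, (if x - a ∈ H then c * ee N ((b - k) * x) else 0)
        = ∑ u : ZMod N, (if u ∈ H then c * ee N ((b - k) * (a + u)) else 0) := by
      refine (Fintype.sum_equiv (Equiv.addLeft a) _ _ (fun u => ?_)).symm
      simp only [Equiv.coe_addLeft, add_sub_cancel_left]
    rw [hreindex]
    have hsplit : ∀ u : ZMod N, (if u ∈ H then c * ee N ((b - k) * (a + u)) else 0)
        = (c * ee N ((b - k) * a)) * (if u ∈ H then ee N ((b - k) * u) else 0) := by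
      intro u
      by_cases hu : u ∈ H
      · rw [if_pos hu, if_pos hu, mul_add, ee_add]; ring
      · rw [if_neg hu, if_neg hu, mul_zero]
    simp_rw [hsplit]
    rw [← Finset.mul_sum, sum_ite_mem_subgroup, sum_ee_subgroup]
    ring
  have hν : (((N : ℝ) ^ (-(1/2 : ℝ)) : ℝ) : ℂ) ≠ 0 := by
    exact_mod_cast (nu_pos (N := N)).ne'
  have hcardH : (Nat.card H : ℂ) ≠ 0 := by
    have : Nat.card H ≠ 0 := Nat.card_pos.ne'
    exact_mod_cast this
  have hsupp2 : Function.support (dft N f) = {k | b - k ∈ perp N H} := by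
    ext k
    simp only [Function.mem_support, Set.mem_setOf_eq]
    rw [hdft k]
    split_ifs with hP
    · simp only [hP, iff_true]
      exact mul_ne_zero (mul_ne_zero hν (mul_ne_zero hc (ee_ne_zero _))) hcardH
    · simp [hP]
  have hcard2 : (Function.support (dft N f)).ncard = Nat.card (perp N H) := by
    rw [hsupp2]
    have himg : {k : ZMod N | b - k ∈ perp N H}
        = (fun p => b - p) '' ((perp N H : Set (ZMod N))) := by
      ext k
      simp only [Set.mem_setOf_eq, Set.mem_image, SetLike.mem_coe]
      constructor
      · intro hk; exact ⟨b - k, hk, by ring⟩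
      · rintro ⟨p, hp, rfl⟩; simpa using hp
    rw [himg, Set.ncard_image_of_injective _ sub_right_injective, subgroup_card_coe]
  rw [hcard1, hcard2, card_mul_card_perp]

end part4

section part5
variable {N : ℕ} [NeZero N]

open scoped Classical

lemma real_sq_eq {a b : ℝ} (ha : 0 ≤ a) (hb : 0 ≤ b) (h : a ^ 2 = b ^ 2) : a = b := by
  have h2 : (a - b) * (a + b) = 0 := by linear_combination h
  rcases mul_eq_zero.mp h2 with h3 | h3
  · linarith
  · linarith

lemma forward_dir (f : ZMod N → ℂ) (hf : f ≠ 0)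
    (hN : (Function.support f).ncard * (Function.support (dft N f)).ncard = N) :
    ∃ (c : ℂ) (_ : c ≠ 0) (a b : ZMod N) (H : AddSubgroup (ZMod N)),
      ∀ x : ZMod N,
        (x - a ∈ H → f x = c * ee N (b * x)) ∧ (x - a ∉ H → f x = 0) := by
  classical
  set ν : ℝ := (N : ℝ) ^ (-(1/2 : ℝ)) with hνdef
  have hν0 : (0 : ℝ) < ν := nu_pos
  set A : Finset (ZMod N) := (Function.support f).toFinset with hAdef
  set B : Finset (ZMod N) := (Function.support (dft N f)).toFinset with hBdef
  have hmemA : ∀ x, x ∈ A ↔ f x ≠ 0 := fun x => by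
    rw [hAdef, Set.mem_toFinset, Function.mem_support]
  have hmemB : ∀ k, k ∈ B ↔ dft N f k ≠ 0 := fun k => by
    rw [hBdef, Set.mem_toFinset, Function.mem_support]
  have hcardA : (Function.support f).ncard = A.card := Set.ncard_eq_toFinset_card' _
  have hcardB : (Function.support (dft N f)).ncard = B.card := Set.ncard_eq_toFinset_card' _
  have hab : A.card * B.card = N := by rw [← hcardA, ← hcardB]; exact hN
  have hAne : A.Nonempty := by
    obtain ⟨x, hx⟩ := Function.ne_iff.mp hf
    exact ⟨x, (hmemA x).mpr hx⟩
  have hBne : B.Nonempty := by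
    rw [← Finset.card_pos]
    rcases Nat.eq_zero_or_pos B.card with h0 | h
    · exfalso; rw [h0, mul_zero] at hab; exact (NeZero.ne N) hab.symm
    · exact h
  set G := ∑ x ∈ A, Complex.abs (f x) with hGdef
  set T := ∑ x ∈ A, Complex.abs (f x) ^ 2 with hTdef
  have hGpos : 0 < G :=
    Finset.sum_pos (fun x hx => AbsoluteValue.pos _ ((hmemA x).mp hx)) hAne
  have hTpos : 0 < T :=
    Finset.sum_pos (fun x hx => pow_pos (AbsoluteValue.pos _ ((hmemA x).mp hx)) 2) hAne
  have hdft_sum : ∀ k, dft N f k = (ν : ℂ) * ∑ x ∈ A, f x * ee N (-(k * x)) := by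
    intro k
    rw [dft_eq]
    congr 1
    refine (Finset.sum_subset (Finset.subset_univ A) ?_).symm
    intro x _ hx
    have h0 : f x = 0 := by by_contra h; exact hx ((hmemA x).mpr h)
    rw [h0, zero_mul]
  have habs_le : ∀ k, Complex.abs (dft N f k) ≤ ν * G := by
    intro k
    rw [hdft_sum k, map_mul, Complex.abs_ofReal, abs_of_pos hν0]
    have h1 : Complex.abs (∑ x ∈ A, f x * ee N (-(k * x)))
        ≤ ∑ x ∈ A, Complex.abs (f x * ee N (-(k * x))) := AbsoluteValue.sum_le _ _ _
    have h2 : ∑ x ∈ A, Complex.abs (f x * ee N (-(k * x))) = G := by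
      rw [hGdef]
      exact Finset.sum_congr rfl fun x _ => by rw [map_mul, abs_ee, mul_one]
    rw [h2] at h1
    exact mul_le_mul_of_nonneg_left h1 hν0.le
  have hpar : ∑ k ∈ B, Complex.abs (dft N f k) ^ 2 = T := by
    have hp := parseval f
    have hL : ∑ k ∈ B, Complex.abs (dft N f k) ^ 2
        = ∑ k : ZMod N, Complex.normSq (dft N f k) := by
      rw [Finset.sum_subset (Finset.subset_univ B) (fun k _ hk => ?_)]
      · exact Finset.sum_congr rfl fun k _ => Complex.sq_abs _
      · have h0 : dft N f k = 0 := by by_contra h; exact hk ((hmemB k).mpr h)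
        rw [h0]; simp
    have hR : ∑ x : ZMod N, Complex.normSq (f x) = T := by
      rw [← Finset.sum_subset (Finset.subset_univ A) (fun x _ hx => ?_)]
      · exact Finset.sum_congr rfl fun x _ => (Complex.sq_abs _).symm
      · have h0 : f x = 0 := by by_contra h; exact hx ((hmemA x).mpr h)
        rw [h0]; simp
    rw [hL, hp, hR]
  have hν2 : ν ^ 2 = (N : ℝ)⁻¹ := nu_sq
  have hNR : (0 : ℝ) < N := by exact_mod_cast Nat.pos_of_ne_zero (NeZero.ne N)
  have hCS : G ^ 2 ≤ A.card * T := by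
    have h := Finset.sum_mul_sq_le_sq_mul_sq A (fun _ => (1 : ℝ)) (fun x => Complex.abs (f x))
    simpa [hGdef, hTdef] using h
  have hboundk : ∀ k, Complex.abs (dft N f k) ^ 2 ≤ ν ^ 2 * G ^ 2 := by
    intro k
    have h1 := habs_le k
    have h2 : Complex.abs (dft N f k) ^ 2 ≤ (ν * G) ^ 2 := by
      have := pow_le_pow_left₀ (AbsoluteValue.nonneg _ _) h1 2
      exact this
    calc Complex.abs (dft N f k) ^ 2 ≤ (ν * G) ^ 2 := h2
      _ = ν ^ 2 * G ^ 2 := by ring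
  have hTle : T ≤ B.card * (ν ^ 2 * G ^ 2) := by
    rw [← hpar]
    have := Finset.sum_le_card_nsmul B (fun k => Complex.abs (dft N f k) ^ 2)
      (ν ^ 2 * G ^ 2) (fun k _ => hboundk k)
    simpa [nsmul_eq_mul] using this
  have hchain3 : (B.card : ℝ) * (ν ^ 2 * ((A.card : ℝ) * T)) = T := by
    rw [hν2]
    have hABN : ((A.card : ℝ) * B.card) = N := by exact_mod_cast hab
    field_simp
    linear_combination hABN
  have hchain2 : (B.card : ℝ) * (ν ^ 2 * G ^ 2) ≤ (B.card : ℝ) * (ν ^ 2 * ((A.card : ℝ) * T)) := by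
    have := mul_le_mul_of_nonneg_left hCS (sq_nonneg ν)
    exact mul_le_mul_of_nonneg_left this (Nat.cast_nonneg _)
  have hTeq : T = (B.card : ℝ) * (ν ^ 2 * G ^ 2) :=
    le_antisymm hTle (by linarith)
  have hCSeq : G ^ 2 = (A.card : ℝ) * T := by
    have hb0 : (0 : ℝ) < B.card := by exact_mod_cast Finset.card_pos.mpr hBne
    have hx : (B.card : ℝ) * (ν ^ 2 * G ^ 2) = (B.card : ℝ) * (ν ^ 2 * ((A.card : ℝ) * T)) := by
      rw [← hTeq, hchain3]
    have h1 := mul_left_cancel₀ (ne_of_gt hb0) hx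
    exact mul_left_cancel₀ (ne_of_gt (pow_pos hν0 2)) h1
  have hkeq : ∀ k ∈ B, Complex.abs (dft N f k) = ν * G := by
    intro k hk
    have hsq : Complex.abs (dft N f k) ^ 2 = ν ^ 2 * G ^ 2 := by
      by_contra hne
      have hlt : Complex.abs (dft N f k) ^ 2 < ν ^ 2 * G ^ 2 :=
        lt_of_le_of_ne (hboundk k) hne
      have hsum := Finset.sum_lt_sum (fun j (_ : j ∈ B) => hboundk j) ⟨k, hk, hlt⟩
      rw [hpar, Finset.sum_const, nsmul_eq_mul] at hsum
      linarith [hTeq]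
    refine real_sq_eq (AbsoluteValue.nonneg _ _) (by positivity) ?_
    rw [hsq]; ring
  obtain ⟨a₀, ha₀⟩ := hAne
  obtain ⟨k₀, hk₀⟩ := hBne
  -- constancy of |f| on A
  have hconst : ∀ x ∈ A, Complex.abs (f x) = Complex.abs (f a₀) := by
    have hexp : ∀ x ∈ A, ∑ y ∈ A, (Complex.abs (f x) - Complex.abs (f y)) ^ 2
        = A.card * Complex.abs (f x) ^ 2 - 2 * Complex.abs (f x) * G + T := by
      intro x _
      have h1 : ∀ y ∈ A, (Complex.abs (f x) - Complex.abs (f y)) ^ 2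
          = Complex.abs (f x) ^ 2 - 2 * Complex.abs (f x) * Complex.abs (f y)
            + Complex.abs (f y) ^ 2 := fun y _ => by ring
      rw [Finset.sum_congr rfl h1, Finset.sum_add_distrib, Finset.sum_sub_distrib,
        Finset.sum_const, nsmul_eq_mul, ← Finset.mul_sum, ← hGdef, ← hTdef]
    have hdouble : ∑ x ∈ A, ∑ y ∈ A, (Complex.abs (f x) - Complex.abs (f y)) ^ 2 = 0 := by
      have h1 : ∑ x ∈ A, ((A.card : ℝ) * Complex.abs (f x) ^ 2) = (A.card : ℝ) * T := by
        rw [← Finset.mul_sum, ← hTdef]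
      have h2s : ∑ x ∈ A, (2 * Complex.abs (f x) * G) = 2 * G * G := by
        have e : ∀ x ∈ A, 2 * Complex.abs (f x) * G = (2 * G) * Complex.abs (f x) :=
          fun x _ => by ring
        rw [Finset.sum_congr rfl e, ← Finset.mul_sum, ← hGdef]
      have h3s : ∑ _x ∈ A, (T : ℝ) = (A.card : ℝ) * T := by
        rw [Finset.sum_const, nsmul_eq_mul]
      calc ∑ x ∈ A, ∑ y ∈ A, (Complex.abs (f x) - Complex.abs (f y)) ^ 2
          = ∑ x ∈ A, ((A.card : ℝ) * Complex.abs (f x) ^ 2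
              - 2 * Complex.abs (f x) * G + T) := Finset.sum_congr rfl hexp
        _ = (∑ x ∈ A, ((A.card : ℝ) * Complex.abs (f x) ^ 2))
              - (∑ x ∈ A, (2 * Complex.abs (f x) * G)) + ∑ _x ∈ A, (T : ℝ) := by
            rw [Finset.sum_add_distrib, Finset.sum_sub_distrib]
        _ = (A.card : ℝ) * T - 2 * G * G + (A.card : ℝ) * T := by rw [h1, h2s, h3s]
        _ = 0 := by
            have hGG : G * G = G ^ 2 := (sq G).symm
            linarith [hCSeq]
    have hzero : ∀ x ∈ A, ∀ y ∈ A, (Complex.abs (f x) - Complex.abs (f y)) ^ 2 = 0 := by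
      intro x hx y hy
      have h1 := (Finset.sum_eq_zero_iff_of_nonneg
        (fun x _ => Finset.sum_nonneg (fun y _ => sq_nonneg _))).mp hdouble x hx
      exact (Finset.sum_eq_zero_iff_of_nonneg (fun y _ => sq_nonneg _)).mp h1 y hy
    intro x hx
    have h2 := hzero x hx a₀ ha₀
    have h3 := pow_eq_zero_iff two_ne_zero |>.mp h2
    exact sub_eq_zero.mp h3
  -- alignment
  have halign : ∀ k ∈ B, ∀ x ∈ A, ∀ y ∈ A,
      f x * ee N (-(k * x)) * (Complex.abs (f y) : ℂ)
        = f y * ee N (-(k * y)) * (Complex.abs (f x) : ℂ) := by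
    intro k hk x hx y hy
    set S := ∑ u ∈ A, f u * ee N (-(k * u)) with hSdef
    have habsG : Complex.abs S = G := by
      have h3 := hkeq k hk
      rw [hdft_sum k, map_mul, Complex.abs_ofReal, abs_of_pos hν0] at h3
      exact mul_left_cancel₀ (ne_of_gt hν0) h3
    have habsS : Complex.abs (∑ u ∈ A, f u * ee N (-(k * u)))
        = ∑ u ∈ A, Complex.abs (f u * ee N (-(k * u))) := by
      rw [← hSdef, habsG, hGdef]
      exact Finset.sum_congr rfl fun u _ => by rw [map_mul, abs_ee, mul_one]
    have hax := align A _ habsS hx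
    have hay := align A _ habsS hy
    rw [map_mul, abs_ee, mul_one] at hax hay
    have hS0 : (Complex.abs S : ℂ) ≠ 0 := by
      rw [habsG]
      exact_mod_cast ne_of_gt hGpos
    have key : (f x * ee N (-(k * x)) * (Complex.abs (f y) : ℂ)) * (Complex.abs S : ℂ)
        = (f y * ee N (-(k * y)) * (Complex.abs (f x) : ℂ)) * (Complex.abs S : ℂ) := by
      linear_combination (Complex.abs (f y) : ℂ) * hax - (Complex.abs (f x) : ℂ) * hay
    exact mul_right_cancel₀ hS0 key
  -- pairwise annihilation
  have hpair : ∀ k ∈ B, ∀ k' ∈ B, ∀ x ∈ A, ∀ y ∈ A, (k - k') * (x - y) = 0 := by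
    intro k hk k' hk' x hx y hy
    have h1 := halign k hk x hx y hy
    have h2 := halign k' hk' x hx y hy
    have hfx := (hmemA x).mp hx
    have hfy := (hmemA y).mp hy
    have hafx : (Complex.abs (f x) : ℂ) ≠ 0 := by
      exact_mod_cast ne_of_gt (AbsoluteValue.pos Complex.abs hfx)
    have hafy : (Complex.abs (f y) : ℂ) ≠ 0 := by
      exact_mod_cast ne_of_gt (AbsoluteValue.pos Complex.abs hfy)
    have h3 : (f x * f y * ((Complex.abs (f x) : ℂ) * (Complex.abs (f y) : ℂ)))
          * (ee N (-(k * x)) * ee N (-(k' * y)))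
        = (f x * f y * ((Complex.abs (f x) : ℂ) * (Complex.abs (f y) : ℂ)))
          * (ee N (-(k * y)) * ee N (-(k' * x))) := by
      linear_combination (f y * ee N (-(k' * y)) * (Complex.abs (f x) : ℂ)) * h1
        - (f y * ee N (-(k * y)) * (Complex.abs (f x) : ℂ)) * h2
    have hc0 : (f x * f y * ((Complex.abs (f x) : ℂ) * (Complex.abs (f y) : ℂ))) ≠ 0 :=
      mul_ne_zero (mul_ne_zero hfx hfy) (mul_ne_zero hafx hafy)
    have h4 := mul_left_cancel₀ hc0 h3
    rw [← ee_add, ← ee_add] at h4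
    have h5 := ee_eq_ee_iff.mp h4
    linear_combination (-1 : ZMod N) * h5
  -- the subgroup
  set Hgrp := AddSubgroup.closure ((fun x => x - a₀) '' (Function.support f)) with hHdef
  have hAH : ∀ x ∈ A, x - a₀ ∈ Hgrp := fun x hx =>
    AddSubgroup.subset_closure ⟨x, Function.mem_support.mpr ((hmemA x).mp hx), rfl⟩
  have hBperp : ∀ k ∈ B, k - k₀ ∈ perp N Hgrp := by
    intro k hk
    rw [mem_perp]
    intro h hh
    have hle : Hgrp ≤ (AddMonoidHom.mulLeft (k - k₀)).ker := by
      rw [hHdef, AddSubgroup.closure_le]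
      rintro z ⟨x, hxsupp, rfl⟩
      have hxA : x ∈ A := (hmemA x).mpr (Function.mem_support.mp hxsupp)
      have hz := hpair k hk k₀ hk₀ x hxA a₀ ha₀
      simpa [AddMonoidHom.mem_ker] using hz
    exact hle hh
  have hAcard_img : ((fun x => x - a₀) '' (Function.support f)).ncard = A.card := by
    rw [Set.ncard_image_of_injective _ sub_left_injective, hcardA]
  have hAcard_le : A.card ≤ Nat.card Hgrp := by
    rw [← hAcard_img, ← subgroup_card_coe]
    exact Set.ncard_le_ncard (by rw [hHdef]; exact AddSubgroup.subset_closure) (Set.toFinite _)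
  have hBcard_le : B.card ≤ Nat.card (perp N Hgrp) := by
    have hsub : (B : Set (ZMod N)) ⊆ (fun p => k₀ + p) '' ((perp N Hgrp : Set (ZMod N))) := by
      intro k hk
      exact ⟨k - k₀, hBperp k (by exact_mod_cast hk), by ring⟩
    calc B.card = (B : Set (ZMod N)).ncard := (Set.ncard_coe_finset B).symm
      _ ≤ ((fun p => k₀ + p) '' ((perp N Hgrp : Set (ZMod N)))).ncard :=
          Set.ncard_le_ncard hsub (Set.toFinite _)
      _ = Nat.card (perp N Hgrp) := by
          rw [Set.ncard_image_of_injective _ (add_right_injective k₀), subgroup_card_coe]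
  have hHperp := card_mul_card_perp Hgrp
  have hperp_pos : 0 < Nat.card (perp N Hgrp) := Nat.card_pos
  have hAeq : A.card = Nat.card Hgrp := by
    refine le_antisymm hAcard_le ?_
    by_contra hlt
    push_neg at hlt
    have h1 : A.card * B.card < Nat.card Hgrp * Nat.card (perp N Hgrp) := by
      calc A.card * B.card ≤ A.card * Nat.card (perp N Hgrp) :=
            Nat.mul_le_mul_left _ hBcard_le
        _ < Nat.card Hgrp * Nat.card (perp N Hgrp) :=
            (Nat.mul_lt_mul_right hperp_pos).mpr hlt
    rw [hab, hHperp] at h1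
    exact lt_irrefl _ h1
  have hset : (fun x => x - a₀) '' (Function.support f) = (Hgrp : Set (ZMod N)) := by
    refine Set.eq_of_subset_of_ncard_le ?_ ?_ (Set.toFinite _)
    · rw [hHdef]; exact AddSubgroup.subset_closure
    · rw [hAcard_img, subgroup_card_coe, hAeq]
  have hmem_iff : ∀ x, (x - a₀ ∈ Hgrp ↔ f x ≠ 0) := by
    intro x
    constructor
    · intro hx
      have hx2 : x - a₀ ∈ (fun x => x - a₀) '' (Function.support f) := by
        rw [hset]; exact hx
      obtain ⟨y, hy, hyx⟩ := hx2
      have hxy : y = x := sub_left_injective hyx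
      rw [← hxy]
      exact Function.mem_support.mp hy
    · intro hx
      exact hAH x ((hmemA x).mpr hx)
  -- final assembly
  refine ⟨f a₀ * ee N (-(k₀ * a₀)),
    mul_ne_zero ((hmemA a₀).mp ha₀) (ee_ne_zero _), a₀, k₀, Hgrp, fun x => ⟨?_, ?_⟩⟩
  · intro hxH
    have hfx : f x ≠ 0 := (hmem_iff x).mp hxH
    have hxA : x ∈ A := (hmemA x).mpr hfx
    have h1 := halign k₀ hk₀ x hxA a₀ ha₀
    have hcx := hconst x hxA
    rw [hcx] at h1
    have hca : (Complex.abs (f a₀) : ℂ) ≠ 0 := by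
      exact_mod_cast ne_of_gt (AbsoluteValue.pos Complex.abs ((hmemA a₀).mp ha₀))
    have h2 : f x * ee N (-(k₀ * x)) = f a₀ * ee N (-(k₀ * a₀)) :=
      mul_right_cancel₀ hca h1
    have h3 : f x * (ee N (-(k₀ * x)) * ee N (k₀ * x))
        = f a₀ * ee N (-(k₀ * a₀)) * ee N (k₀ * x) := by
      linear_combination ee N (k₀ * x) * h2
    rw [ee_neg_mul, mul_one] at h3
    exact h3
  · intro hxH
    by_contra hfx
    exact hxH ((hmem_iff x).mpr hfx)

end part5

/-- A nonzero f on ZMod N saturates the Donoho–Stark uncertainty principle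
if and only if f is a bi-shift of a biprojection, i.e. a nonzero multiple of a
modulated translate of the indicator function of a subgroup. -/
theorem extremal_iff_bishift (N : ℕ) [NeZero N] (f : ZMod N → ℂ) (hf : f ≠ 0) :
    (Function.support f).ncard * (Function.support (dft N f)).ncard = N ↔
      ∃ (c : ℂ) (_ : c ≠ 0) (a b : ZMod N) (H : AddSubgroup (ZMod N)),
        ∀ x : ZMod N,
          (x - a ∈ H →
            f x = c * Complex.exp
              (2 * Real.pi * Complex.I * (b.val : ℂ) * (x.val : ℂ) / (N : ℂ))) ∧
          (x - a ∉ H → f x = 0) := by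
  constructor
  · intro h
    obtain ⟨c, hc, a, b, H, hstruct⟩ := forward_dir f hf h
    refine ⟨c, hc, a, b, H, fun x => ⟨fun hx => ?_, (hstruct x).2⟩⟩
    rw [(hstruct x).1 hx, exp_pos_eq]
  · rintro ⟨c, hc, a, b, H, hstruct⟩
    apply reverse_dir f c hc a b H
    intro x
    refine ⟨fun hx => ?_, (hstruct x).2⟩
    rw [(hstruct x).1 hx, ← exp_pos_eq]
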